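/- Let G be a graph with independence number α ≥ 2, C a vertex cover of G with complement S satisfying 1 ≤ |S| ≤ α − 1, and H = G(C) the C-suspension. Then G is pseudo-Gorenstein* if and only if H is pseudo-Gorenstein*. -/

import Mathlib

open scoped Classical

/-- A finset of vertices is independent: no two of its members are adjacent. -/
def IsIndepFinset {V : Type*} (G : SimpleGraph V) (s : Finset V) : Prop :=
  ∀ a ∈ s, ∀ b ∈ s, ¬ G.Adj a b

/-- The independence polynomial of `G`, evaluated at `x : ℤ`:
`P_G(x) = Σ_i g_i x^i` where `g_i` is the number of independent sets of size `i`. -/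
noncomputable def indepPolynomial {V : Type*} [Fintype V] (G : SimpleGraph V) (x : ℤ) : ℤ :=
  ∑ s ∈ Finset.univ.filter (fun s : Finset V => IsIndepFinset G s), x ^ s.card

/-- The independence number of `G`. -/
noncomputable def indepNumber {V : Type*} [Fintype V] (G : SimpleGraph V) : ℕ :=
  (Finset.univ.filter (fun s : Finset V => IsIndepFinset G s)).sup Finset.card

/-- The `C`-suspension of `G`: adjoin a new vertex (`none`) adjacent exactly to `C`. -/
def susp {V : Type*} (G : SimpleGraph V) (C : Set V) : SimpleGraph (Option V) where
  Adj a b :=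
    match a, b with
    | some a, some b => G.Adj a b
    | some a, none => a ∈ C
    | none, some b => b ∈ C
    | none, none => False
  symm := by
    refine ⟨?_⟩
    rintro (_ | a) (_ | b) h
    · exact h
    · exact h
    · exact h
    · exact h.symm
  loopless := by
    refine ⟨?_⟩
    rintro (_ | a) h
    · exact h
    · exact G.ne_of_adj h rfl

/-- A graph is pseudo-Gorenstein* iff `P_G(-1) = (-1)^{α(G)}`. -/
noncomputable def PseudoGorensteinStar {V : Type*} [Fintype V] (G : SimpleGraph V) : Prop :=
  indepPolynomial G (-1) = (-1) ^ indepNumber G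

section Aux

variable {V : Type*} [Fintype V] [DecidableEq V]

lemma indep_susp_iff (G : SimpleGraph V) (C : Finset V) (s' : Finset (Option V)) :
    IsIndepFinset (susp G (↑C : Set V)) s' ↔
      IsIndepFinset G s'.eraseNone ∧ (none ∈ s' → ∀ a ∈ s'.eraseNone, a ∉ C) := by
  constructor
  · intro h
    refine ⟨fun a ha b hb hab => h (some a) (Finset.mem_eraseNone.1 ha)
      (some b) (Finset.mem_eraseNone.1 hb) hab, fun hn a ha hC => ?_⟩
    exact h none hn (some a) (Finset.mem_eraseNone.1 ha) hC
  · rintro ⟨h1, h2⟩ (_ | a) ha (_ | b) hb hab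
    · exact hab
    · exact h2 ha b (Finset.mem_eraseNone.2 hb) hab
    · exact h2 hb a (Finset.mem_eraseNone.2 ha) hab
    · exact h1 a (Finset.mem_eraseNone.2 ha) b (Finset.mem_eraseNone.2 hb) hab

lemma indep_image_some (G : SimpleGraph V) (C : Finset V) (s : Finset V)
    (h : IsIndepFinset G s) :
    IsIndepFinset (susp G (↑C : Set V)) (s.image some) := by
  rw [indep_susp_iff, Finset.eraseNone_image_some]
  exact ⟨h, fun hn => by simp at hn⟩

lemma card_of_none_mem {s' : Finset (Option V)} (h : none ∈ s') :
    s'.card = s'.eraseNone.card + 1 := by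
  have : Finset.insertNone s'.eraseNone = s' := by
    rw [Finset.insertNone_eraseNone, Finset.insert_eq_self.2 h]
  rw [← this, Finset.card_insertNone, Finset.eraseNone_insertNone]

lemma card_of_none_not_mem {s' : Finset (Option V)} (h : none ∉ s') :
    s'.card = s'.eraseNone.card := by
  have : (s'.eraseNone).image some = s' := by
    rw [Finset.image_some_eraseNone, Finset.erase_eq_self.2 h]
  conv_lhs => rw [← this]
  rw [Finset.card_image_of_injective _ (Option.some_injective V)]

lemma subset_compl_indep (G : SimpleGraph V) (C : Finset V)
    (hcover : ∀ a b, G.Adj a b → a ∈ C ∨ b ∈ C) (t : Finset V) (ht : t ⊆ Cᶜ) :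
    IsIndepFinset G t := by
  intro a ha b hb hab
  rcases hcover a b hab with h | h
  · exact (Finset.mem_compl.1 (ht ha)) h
  · exact (Finset.mem_compl.1 (ht hb)) h

lemma indepNumber_susp (G : SimpleGraph V) (C : Finset V)
    (hcover : ∀ a b, G.Adj a b → a ∈ C ∨ b ∈ C)
    (hα : 2 ≤ indepNumber G)
    (hS2 : (Cᶜ : Finset V).card ≤ indepNumber G - 1) :
    indepNumber (susp G (↑C : Set V)) = indepNumber G := by
  apply le_antisymm
  · apply Finset.sup_le
    intro s' hs'
    rw [Finset.mem_filter] at hs'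
    obtain ⟨h1, h2⟩ := (indep_susp_iff G C s').1 hs'.2
    have hle : s'.eraseNone.card ≤ indepNumber G :=
      Finset.le_sup (f := Finset.card) (Finset.mem_filter.2 ⟨Finset.mem_univ _, h1⟩)
    by_cases hn : none ∈ s'
    · rw [card_of_none_mem hn]
      have hsub : s'.eraseNone ⊆ Cᶜ := fun a ha => Finset.mem_compl.2 (h2 hn a ha)
      have h3 := Finset.card_le_card hsub
      omega
    · rw [card_of_none_not_mem hn]; exact hle
  · apply Finset.sup_le
    intro s hs
    rw [Finset.mem_filter] at hs
    have : (s.image some).card ≤ indepNumber (susp G (↑C : Set V)) :=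
      Finset.le_sup (f := Finset.card) (Finset.mem_filter.2
        ⟨Finset.mem_univ _, indep_image_some G C s hs.2⟩)
    rwa [Finset.card_image_of_injective _ (Option.some_injective V)] at this

lemma indepPolynomial_susp (G : SimpleGraph V) (C : Finset V)
    (hcover : ∀ a b, G.Adj a b → a ∈ C ∨ b ∈ C)
    (hS1 : 1 ≤ (Cᶜ : Finset V).card) :
    indepPolynomial (susp G (↑C : Set V)) (-1) = indepPolynomial G (-1) := by
  classical
  unfold indepPolynomial
  rw [← Finset.sum_filter_add_sum_filter_not
    (Finset.univ.filter fun s : Finset (Option V) => IsIndepFinset (susp G (↑C : Set V)) s)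
    (fun s => none ∈ s)]
  have h1 : ∑ s' ∈ (Finset.univ.filter fun s : Finset (Option V) =>
      IsIndepFinset (susp G (↑C : Set V)) s).filter (fun s => none ∈ s),
      (-1 : ℤ) ^ s'.card = 0 := by
    have : ∑ s' ∈ (Finset.univ.filter fun s : Finset (Option V) =>
        IsIndepFinset (susp G (↑C : Set V)) s).filter (fun s => none ∈ s),
        (-1 : ℤ) ^ s'.card = ∑ t ∈ (Cᶜ : Finset V).powerset, (-1 : ℤ) ^ (t.card + 1) := by
      refine Finset.sum_bij' (fun s' _ => s'.eraseNone)
        (fun t _ => Finset.insertNone t) ?_ ?_ ?_ ?_ ?_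
      · intro s' hs'
        simp only [Finset.mem_filter, Finset.mem_univ, true_and] at hs'
        obtain ⟨hind, hn⟩ := hs'
        obtain ⟨_, h2⟩ := (indep_susp_iff G C s').1 hind
        exact Finset.mem_powerset.2 fun a ha => Finset.mem_compl.2 (h2 hn a ha)
      · intro t ht
        rw [Finset.mem_powerset] at ht
        simp only [Finset.mem_filter, Finset.mem_univ, true_and]
        constructor
        · rw [indep_susp_iff, Finset.eraseNone_insertNone]
          exact ⟨subset_compl_indep G C hcover t ht,
            fun _ a ha => Finset.mem_compl.1 (ht ha)⟩
        · simp
      · intro s' hs'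
        simp only [Finset.mem_filter, Finset.mem_univ, true_and] at hs'
        show Finset.insertNone s'.eraseNone = s'
        rw [Finset.insertNone_eraseNone, Finset.insert_eq_self.2 hs'.2]
      · intro t _; exact Finset.eraseNone_insertNone t
      · intro s' hs'
        simp only [Finset.mem_filter, Finset.mem_univ, true_and] at hs'
        rw [card_of_none_mem hs'.2]
    rw [this]
    have : ∑ t ∈ (Cᶜ : Finset V).powerset, (-1 : ℤ) ^ (t.card + 1) =
        -∑ t ∈ (Cᶜ : Finset V).powerset, (-1 : ℤ) ^ t.card := by
      rw [← Finset.sum_neg_distrib]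
      exact Finset.sum_congr rfl fun t _ => by ring
    rw [this, Finset.sum_powerset_neg_one_pow_card_of_nonempty
      (Finset.card_pos.1 hS1), neg_zero]
  have h2 : ∑ s' ∈ (Finset.univ.filter fun s : Finset (Option V) =>
      IsIndepFinset (susp G (↑C : Set V)) s).filter (fun s => ¬ none ∈ s),
      (-1 : ℤ) ^ s'.card =
      ∑ s ∈ Finset.univ.filter (fun s : Finset V => IsIndepFinset G s),
      (-1 : ℤ) ^ s.card := by
    refine Finset.sum_bij' (fun s' _ => s'.eraseNone)
      (fun s _ => s.image some) ?_ ?_ ?_ ?_ ?_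
    · intro s' hs'
      simp only [Finset.mem_filter, Finset.mem_univ, true_and] at hs' ⊢
      exact ((indep_susp_iff G C s').1 hs'.1).1
    · intro s hs
      simp only [Finset.mem_filter, Finset.mem_univ, true_and] at hs ⊢
      exact ⟨indep_image_some G C s hs, by simp⟩
    · intro s' hs'
      simp only [Finset.mem_filter, Finset.mem_univ, true_and] at hs'
      show (s'.eraseNone).image some = s'
      rw [Finset.image_some_eraseNone, Finset.erase_eq_self.2 hs'.2]
    · intro s _; exact Finset.eraseNone_image_some s
    · intro s' hs'
      simp only [Finset.mem_filter, Finset.mem_univ, true_and] at hs'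
      rw [card_of_none_not_mem hs'.2]
  rw [h1, h2, zero_add]

end Aux

/-- Suspension over a vertex cover `C` with `1 ≤ |S| ≤ α - 1` preserves the
pseudo-Gorenstein* property. -/
theorem stmt14 {V : Type*} [Fintype V] [DecidableEq V] (G : SimpleGraph V)
    (C : Finset V) (hcover : ∀ a b, G.Adj a b → a ∈ C ∨ b ∈ C)
    (hα : 2 ≤ indepNumber G)
    (hS1 : 1 ≤ (Cᶜ : Finset V).card)
    (hS2 : (Cᶜ : Finset V).card ≤ indepNumber G - 1) :
    PseudoGorensteinStar G ↔ PseudoGorensteinStar (susp G (↑C : Set V)) := by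
  unfold PseudoGorensteinStar
  rw [indepPolynomial_susp G C hcover hS1, indepNumber_susp G C hcover hα hS2]
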